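/- arXiv:1310.3933 — 8 statements merged into one kernel-verified Lean document; each statement's English description precedes it below -/
import Mathlib

section
/- Let c = (1−x²)²(1+x)(1−x−y)(1−y²)(1+y) in the polynomial ring ℤ[x,y], where x and y are given degree 1, and let c₃ and c₄ denote the homogeneous components of c of degree 3 and degree 4 respectively. Then c₃·c₄ + 2·x⁴y³ lies in the ideal of ℤ[x,y] generated by x⁵ and y⁴ + xy³; equivalently, c₃·c₄ is congruent to −2·x⁴y³ modulo that ideal. -/
open MvPolynomial

/-- `x` in `ℤ[x,y]`. -/
noncomputable def px : MvPolynomial (Fin 2) ℤ := X 0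
/-- `y` in `ℤ[x,y]`. -/
noncomputable def py : MvPolynomial (Fin 2) ℤ := X 1

/-- The total Chern class `c = (1−x²)²(1+x)(1−x−y)(1−y²)(1+y)` of `M(P⁷, λ₂^{⟨7⟩})`. -/
noncomputable def c7 : MvPolynomial (Fin 2) ℤ :=
  (1 - px ^ 2) ^ 2 * (1 + px) * (1 - px - py) * (1 - py ^ 2) * (1 + py)

lemma hmon (a b n : ℕ) (k : ℤ) (h : a + b = n) :
    ((C k : MvPolynomial (Fin 2) ℤ) * px ^ a * py ^ b).IsHomogeneous n := by
  rw [mul_assoc]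
  simpa [h, px, py] using (((isHomogeneous_X ℤ (0 : Fin 2)).pow a).mul
    ((isHomogeneous_X ℤ (1 : Fin 2)).pow b)).C_mul k

noncomputable def q0 : MvPolynomial (Fin 2) ℤ := 1
noncomputable def q2 : MvPolynomial (Fin 2) ℤ := -2 * py ^ 2 - 3 * px ^ 2 - px * py
noncomputable def q3 : MvPolynomial (Fin 2) ℤ := -(px ^ 2 * py) - px * py ^ 2
noncomputable def q4 : MvPolynomial (Fin 2) ℤ :=
  py ^ 4 + 5 * px ^ 2 * py ^ 2 + px * py ^ 3 + 3 * px ^ 4 + 2 * px ^ 3 * py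
noncomputable def q5 : MvPolynomial (Fin 2) ℤ :=
  px ^ 2 * py ^ 3 + px * py ^ 4 + 2 * px ^ 4 * py + 2 * px ^ 3 * py ^ 2
noncomputable def q6 : MvPolynomial (Fin 2) ℤ :=
  -2 * px ^ 2 * py ^ 4 - 4 * px ^ 4 * py ^ 2 - 2 * px ^ 3 * py ^ 3 - px ^ 6 - px ^ 5 * py
noncomputable def q7 : MvPolynomial (Fin 2) ℤ :=
  -2 * px ^ 4 * py ^ 3 - 2 * px ^ 3 * py ^ 4 - px ^ 6 * py - px ^ 5 * py ^ 2
noncomputable def q8 : MvPolynomial (Fin 2) ℤ :=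
  px ^ 4 * py ^ 4 + px ^ 6 * py ^ 2 + px ^ 5 * py ^ 3
noncomputable def q9 : MvPolynomial (Fin 2) ℤ := px ^ 6 * py ^ 3 + px ^ 5 * py ^ 4

lemma hq0 : q0.IsHomogeneous 0 := by simpa [q0] using isHomogeneous_C (Fin 2) (1 : ℤ)
lemma hq2 : q2.IsHomogeneous 2 := by
  have := ((hmon 0 2 2 (-2) rfl).add (hmon 2 0 2 (-3) rfl)).add (hmon 1 1 2 (-1) rfl)
  convert this using 1
  simp only [q2, map_neg, map_one, map_ofNat]
  ring
lemma hq3 : q3.IsHomogeneous 3 := by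
  have := (hmon 2 1 3 (-1) rfl).add (hmon 1 2 3 (-1) rfl)
  convert this using 1
  simp only [q3, map_neg, map_one]
  ring
lemma hq4 : q4.IsHomogeneous 4 := by
  have := ((((hmon 0 4 4 1 rfl).add (hmon 2 2 4 5 rfl)).add (hmon 1 3 4 1 rfl)).add
    (hmon 4 0 4 3 rfl)).add (hmon 3 1 4 2 rfl)
  convert this using 1
  simp only [q4, map_one, map_ofNat]
  ring
lemma hq5 : q5.IsHomogeneous 5 := by
  have := (((hmon 2 3 5 1 rfl).add (hmon 1 4 5 1 rfl)).add (hmon 4 1 5 2 rfl)).add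
    (hmon 3 2 5 2 rfl)
  convert this using 1
  simp only [q5, map_one, map_ofNat]
  ring
lemma hq6 : q6.IsHomogeneous 6 := by
  have := ((((hmon 2 4 6 (-2) rfl).add (hmon 4 2 6 (-4) rfl)).add (hmon 3 3 6 (-2) rfl)).add
    (hmon 6 0 6 (-1) rfl)).add (hmon 5 1 6 (-1) rfl)
  convert this using 1
  simp only [q6, map_neg, map_one, map_ofNat]
  ring
lemma hq7 : q7.IsHomogeneous 7 := by
  have := (((hmon 4 3 7 (-2) rfl).add (hmon 3 4 7 (-2) rfl)).add (hmon 6 1 7 (-1) rfl)).add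
    (hmon 5 2 7 (-1) rfl)
  convert this using 1
  simp only [q7, map_neg, map_one, map_ofNat]
  ring
lemma hq8 : q8.IsHomogeneous 8 := by
  have := ((hmon 4 4 8 1 rfl).add (hmon 6 2 8 1 rfl)).add (hmon 5 3 8 1 rfl)
  convert this using 1
  simp only [q8, map_one]
  ring
lemma hq9 : q9.IsHomogeneous 9 := by
  have := (hmon 6 3 9 1 rfl).add (hmon 5 4 9 1 rfl)
  convert this using 1
  simp only [q9, map_one]
  ring

lemma c7_eq : c7 = q0 + q2 + q3 + q4 + q5 + q6 + q7 + q8 + q9 := by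
  simp only [c7, q0, q2, q3, q4, q5, q6, q7, q8, q9]
  ring

lemma hc3 : homogeneousComponent 3 c7 = q3 := by
  rw [c7_eq]
  simp only [map_add,
    homogeneousComponent_of_mem ((mem_homogeneousSubmodule _ _).mpr hq0),
    homogeneousComponent_of_mem ((mem_homogeneousSubmodule _ _).mpr hq2),
    homogeneousComponent_of_mem ((mem_homogeneousSubmodule _ _).mpr hq3),
    homogeneousComponent_of_mem ((mem_homogeneousSubmodule _ _).mpr hq4),
    homogeneousComponent_of_mem ((mem_homogeneousSubmodule _ _).mpr hq5),
    homogeneousComponent_of_mem ((mem_homogeneousSubmodule _ _).mpr hq6),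
    homogeneousComponent_of_mem ((mem_homogeneousSubmodule _ _).mpr hq7),
    homogeneousComponent_of_mem ((mem_homogeneousSubmodule _ _).mpr hq8),
    homogeneousComponent_of_mem ((mem_homogeneousSubmodule _ _).mpr hq9)]
  norm_num

lemma hc4 : homogeneousComponent 4 c7 = q4 := by
  rw [c7_eq]
  simp only [map_add,
    homogeneousComponent_of_mem ((mem_homogeneousSubmodule _ _).mpr hq0),
    homogeneousComponent_of_mem ((mem_homogeneousSubmodule _ _).mpr hq2),
    homogeneousComponent_of_mem ((mem_homogeneousSubmodule _ _).mpr hq3),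
    homogeneousComponent_of_mem ((mem_homogeneousSubmodule _ _).mpr hq4),
    homogeneousComponent_of_mem ((mem_homogeneousSubmodule _ _).mpr hq5),
    homogeneousComponent_of_mem ((mem_homogeneousSubmodule _ _).mpr hq6),
    homogeneousComponent_of_mem ((mem_homogeneousSubmodule _ _).mpr hq7),
    homogeneousComponent_of_mem ((mem_homogeneousSubmodule _ _).mpr hq8),
    homogeneousComponent_of_mem ((mem_homogeneousSubmodule _ _).mpr hq9)]
  norm_num

/-- The homogeneous components `c₃`, `c₄` of `c` (with `x`, `y` of degree 1) satisfy
`c₃ · c₄ ≡ −2·x⁴y³` modulo the ideal `⟨x⁵, y⁴ + xy³⟩` of `ℤ[x,y]`. -/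
theorem stmt0 :
    homogeneousComponent 3 c7 * homogeneousComponent 4 c7 + 2 * px ^ 4 * py ^ 3 ∈
      Ideal.span ({px ^ 5, py ^ 4 + px * py ^ 3} : Set (MvPolynomial (Fin 2) ℤ)) := by
  rw [hc3, hc4, Ideal.mem_span_pair]
  refine ⟨-3 * px * py - 5 * py ^ 2, -(px ^ 2 * py) - 5 * px ^ 3 - px * py ^ 2, ?_⟩
  simp only [q3, q4]
  ring
end

section
/- Let c = (1−x²)²(1−y²)²(1−(x−y)²) in the polynomial ring ℤ[x,y], where x and y are given degree 1, and let c₄ denote the homogeneous component of c of degree 4. Then c₄² − 4·x³y⁵ lies in the ideal of ℤ[x,y] generated by x⁴ and y⁴(x−y)²; equivalently, c₄² is congruent to 4·x³y⁵ modulo that ideal. -/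
open MvPolynomial

/-- The total Chern class `c = (1−x²)²(1−y²)²(1−(x−y)²)` of `M(P⁸, λ₂^{⟨8⟩})`. -/
noncomputable def c8 : MvPolynomial (Fin 2) ℤ :=
  (1 - px ^ 2) ^ 2 * (1 - py ^ 2) ^ 2 * (1 - (px - py) ^ 2)

lemma px_hom : px.IsHomogeneous 1 := isHomogeneous_X _ _
lemma py_hom : py.IsHomogeneous 1 := isHomogeneous_X _ _

lemma mono_hom (a b : ℕ) (r : ℤ) : (C r * px ^ a * py ^ b).IsHomogeneous (a + b) := by
  have := ((isHomogeneous_C (Fin 2) r).mul (px_hom.pow a)).mul (py_hom.pow b)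
  simpa using this

lemma c4_eq : homogeneousComponent 4 c8 =
    C 3 * px ^ 0 * py ^ 4 + C (-4) * px ^ 1 * py ^ 3 + C 8 * px ^ 2 * py ^ 2
      + C (-4) * px ^ 3 * py ^ 1 + C 3 * px ^ 4 * py ^ 0 := by
  have h0 : (1 : MvPolynomial (Fin 2) ℤ).IsHomogeneous 0 := isHomogeneous_one _ _
  have h2 : (C (-3) * px ^ 0 * py ^ 2 + C 2 * px ^ 1 * py ^ 1
      + C (-3) * px ^ 2 * py ^ 0 : MvPolynomial (Fin 2) ℤ).IsHomogeneous 2 :=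
    ((mono_hom 0 2 _).add (mono_hom 1 1 _)).add (mono_hom 2 0 _)
  have h4 : (C 3 * px ^ 0 * py ^ 4 + C (-4) * px ^ 1 * py ^ 3 + C 8 * px ^ 2 * py ^ 2
      + C (-4) * px ^ 3 * py ^ 1 + C 3 * px ^ 4 * py ^ 0 :
      MvPolynomial (Fin 2) ℤ).IsHomogeneous 4 :=
    ((((mono_hom 0 4 _).add (mono_hom 1 3 _)).add (mono_hom 2 2 _)).add
      (mono_hom 3 1 _)).add (mono_hom 4 0 _)
  have h6 : (C (-1) * px ^ 0 * py ^ 6 + C 2 * px ^ 1 * py ^ 5 + C (-7) * px ^ 2 * py ^ 4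
      + C 8 * px ^ 3 * py ^ 3 + C (-7) * px ^ 4 * py ^ 2 + C 2 * px ^ 5 * py ^ 1
      + C (-1) * px ^ 6 * py ^ 0 : MvPolynomial (Fin 2) ℤ).IsHomogeneous 6 :=
    ((((((mono_hom 0 6 _).add (mono_hom 1 5 _)).add (mono_hom 2 4 _)).add
      (mono_hom 3 3 _)).add (mono_hom 4 2 _)).add (mono_hom 5 1 _)).add (mono_hom 6 0 _)
  have h8 : (C 2 * px ^ 2 * py ^ 6 + C (-4) * px ^ 3 * py ^ 5 + C 5 * px ^ 4 * py ^ 4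
      + C (-4) * px ^ 5 * py ^ 3 + C 2 * px ^ 6 * py ^ 2 :
      MvPolynomial (Fin 2) ℤ).IsHomogeneous 8 :=
    ((((mono_hom 2 6 _).add (mono_hom 3 5 _)).add (mono_hom 4 4 _)).add
      (mono_hom 5 3 _)).add (mono_hom 6 2 _)
  have h10 : (C (-1) * px ^ 4 * py ^ 6 + C 2 * px ^ 5 * py ^ 5 + C (-1) * px ^ 6 * py ^ 4 :
      MvPolynomial (Fin 2) ℤ).IsHomogeneous 10 :=
    ((mono_hom 4 6 _).add (mono_hom 5 5 _)).add (mono_hom 6 4 _)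
  have hdecomp : c8 = 1
      + (C (-3) * px ^ 0 * py ^ 2 + C 2 * px ^ 1 * py ^ 1 + C (-3) * px ^ 2 * py ^ 0)
      + (C 3 * px ^ 0 * py ^ 4 + C (-4) * px ^ 1 * py ^ 3 + C 8 * px ^ 2 * py ^ 2
          + C (-4) * px ^ 3 * py ^ 1 + C 3 * px ^ 4 * py ^ 0)
      + (C (-1) * px ^ 0 * py ^ 6 + C 2 * px ^ 1 * py ^ 5 + C (-7) * px ^ 2 * py ^ 4
          + C 8 * px ^ 3 * py ^ 3 + C (-7) * px ^ 4 * py ^ 2 + C 2 * px ^ 5 * py ^ 1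
          + C (-1) * px ^ 6 * py ^ 0)
      + (C 2 * px ^ 2 * py ^ 6 + C (-4) * px ^ 3 * py ^ 5 + C 5 * px ^ 4 * py ^ 4
          + C (-4) * px ^ 5 * py ^ 3 + C 2 * px ^ 6 * py ^ 2)
      + (C (-1) * px ^ 4 * py ^ 6 + C 2 * px ^ 5 * py ^ 5 + C (-1) * px ^ 6 * py ^ 4) := by
    simp only [c8]
    ring_nf
    simp only [map_neg, map_ofNat, map_one]
    ring
  rw [hdecomp]
  rw [map_add, map_add, map_add, map_add, map_add]
  rw [homogeneousComponent_of_mem h0, homogeneousComponent_of_mem h2,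
    homogeneousComponent_of_mem h4, homogeneousComponent_of_mem h6,
    homogeneousComponent_of_mem h8, homogeneousComponent_of_mem h10]
  norm_num

/-- The homogeneous component `c₄` of `c` (with `x`, `y` of degree 1) satisfies
`c₄² ≡ 4·x³y⁵` modulo the ideal `⟨x⁴, y⁴(x−y)²⟩` of `ℤ[x,y]`. -/
theorem stmt2 :
    homogeneousComponent 4 c8 ^ 2 - 4 * px ^ 3 * py ^ 5 ∈
      Ideal.span ({px ^ 4, py ^ 4 * (px - py) ^ 2} : Set (MvPolynomial (Fin 2) ℤ)) := by
  rw [Ideal.mem_span_pair]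
  refine ⟨C 71 * py ^ 4 + C (-88) * px * py ^ 3 + C 64 * px ^ 2 * py ^ 2
      + C (-24) * px ^ 3 * py + C 9 * px ^ 4,
    C 9 * py ^ 2 + C (-6) * px * py + C 43 * px ^ 2, ?_⟩
  rw [c4_eq]
  simp only [map_neg, map_ofNat, map_one]
  ring
end

section
/- For every integer m, if m·x³y⁵ lies in the ideal of ℤ[x,y] generated by x⁴ and y⁴(x−y)², then m = 0. In particular x³y⁵ is not in that ideal, so its image in ℤ[x,y]/⟨x⁴, y⁴(x−y)²⟩ generates an infinite cyclic subgroup. -/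
open MvPolynomial

/-- The ideal `⟨x⁴, y⁴(x−y)²⟩` of `ℤ[x,y]`. -/
noncomputable def I8 : Ideal (MvPolynomial (Fin 2) ℤ) :=
  Ideal.span ({px ^ 4, py ^ 4 * (px - py) ^ 2} : Set (MvPolynomial (Fin 2) ℤ))

noncomputable def d (i j : ℕ) : Fin 2 →₀ ℕ := Finsupp.single 0 i + Finsupp.single 1 j

lemma d_apply0 (i j : ℕ) : d i j 0 = i := by simp [d, Finsupp.single_apply]
lemma d_apply1 (i j : ℕ) : d i j 1 = j := by simp [d, Finsupp.single_apply]

lemma d_le {s t i j : ℕ} : d s t ≤ d i j ↔ s ≤ i ∧ t ≤ j := by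
  rw [Finsupp.le_def]
  constructor
  · intro h
    exact ⟨by simpa [d_apply0] using h 0, by simpa [d_apply1] using h 1⟩
  · rintro ⟨h1, h2⟩ k
    fin_cases k <;> simpa [d_apply0, d_apply1]

lemma d_sub (s t i j : ℕ) : d i j - d s t = d (i - s) (j - t) := by
  ext k
  fin_cases k <;> simp [Finsupp.tsub_apply, d_apply0, d_apply1]

lemma mono35 : px ^ 3 * py ^ 5 = monomial (d 3 5) (1 : ℤ) := by
  simp [px, py, d, X_pow_eq_monomial, monomial_mul]

lemma g1_expand : px ^ 4 = monomial (d 4 0) (1 : ℤ) := by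
  simp [px, d, X_pow_eq_monomial]

lemma g2_expand : py ^ 4 * (px - py) ^ 2 =
    monomial (d 2 4) (1 : ℤ) + monomial (d 1 5) (-2 : ℤ) + monomial (d 0 6) (1 : ℤ) := by
  have h1 : px ^ 2 * py ^ 4 = monomial (d 2 4) (1 : ℤ) := by
    simp [px, py, d, X_pow_eq_monomial, monomial_mul]
  have h2 : px ^ 1 * py ^ 5 = monomial (d 1 5) (1 : ℤ) := by
    rw [px, py, X_pow_eq_monomial, X_pow_eq_monomial, monomial_mul, mul_one]; rfl
  have h3 : py ^ 6 = monomial (d 0 6) (1 : ℤ) := by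
    simp [py, d, X_pow_eq_monomial]
  have hC : (C (-2 : ℤ) : MvPolynomial (Fin 2) ℤ) = -2 := by simp
  have key : py ^ 4 * (px - py) ^ 2 =
      px ^ 2 * py ^ 4 + C (-2 : ℤ) * (px ^ 1 * py ^ 5) + py ^ 6 := by
    rw [hC]; ring
  rw [key, h1, h2, h3, C_mul_monomial, mul_one]

/-- The linear functional detecting `x³y⁵` mod the ideal. -/
noncomputable def phi (p : MvPolynomial (Fin 2) ℤ) : ℤ :=
  coeff (d 3 5) p + 2 * coeff (d 2 6) p + 3 * coeff (d 1 7) p + 4 * coeff (d 0 8) p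

lemma phi_add (p q : MvPolynomial (Fin 2) ℤ) : phi (p + q) = phi p + phi q := by
  simp [phi, coeff_add]; ring

lemma coeff_mul_mono (i j s t : ℕ) (r : ℤ) (p : MvPolynomial (Fin 2) ℤ) :
    coeff (d i j) (p * monomial (d s t) r) =
      if s ≤ i ∧ t ≤ j then coeff (d (i - s) (j - t)) p * r else 0 := by
  rw [coeff_mul_monomial', d_sub]
  simp [d_le]

lemma phi_g1 (a : MvPolynomial (Fin 2) ℤ) : phi (a * px ^ 4) = 0 := by
  rw [g1_expand]
  simp [phi, coeff_mul_mono]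

lemma phi_g2 (b : MvPolynomial (Fin 2) ℤ) : phi (b * (py ^ 4 * (px - py) ^ 2)) = 0 := by
  rw [g2_expand]
  simp only [phi, mul_add, coeff_add, coeff_mul_mono]
  norm_num
  ring

lemma d00 : d 0 0 = (0 : Fin 2 →₀ ℕ) := by simp [d]

lemma phi_target (m : ℤ) : phi (C m * (px ^ 3 * py ^ 5)) = m := by
  rw [mono35]
  simp [phi, coeff_mul_mono, d00, coeff_C]
  rw [← map_intCast (C : ℤ →+* MvPolynomial (Fin 2) ℤ) m, coeff_zero_C, Int.cast_id]

/-- For every integer `m`, if `m·x³y⁵ ∈ ⟨x⁴, y⁴(x−y)²⟩` then `m = 0`; in particular `x³y⁵`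
is not in that ideal and its image in the quotient `ℤ[x,y]/⟨x⁴, y⁴(x−y)²⟩` generates an
infinite cyclic subgroup (i.e. `m ↦ m • [x³y⁵]` is injective). -/
theorem stmt3 :
    (∀ m : ℤ, C m * (px ^ 3 * py ^ 5) ∈ I8 → m = 0) ∧
    px ^ 3 * py ^ 5 ∉ I8 ∧
    Function.Injective (fun m : ℤ => m • Ideal.Quotient.mk I8 (px ^ 3 * py ^ 5)) := by
  have main : ∀ m : ℤ, C m * (px ^ 3 * py ^ 5) ∈ I8 → m = 0 := by
    intro m hm
    rw [I8, Ideal.mem_span_pair] at hm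
    obtain ⟨a, b, hab⟩ := hm
    have h := congrArg phi hab
    rw [phi_add, phi_g1, phi_g2, phi_target] at h
    simpa using h.symm
  refine ⟨main, ?_, ?_⟩
  · intro h
    have := main 1 (by simpa using h)
    exact one_ne_zero this
  · intro m m' h
    simp only at h
    have hz : (m - m') • Ideal.Quotient.mk I8 (px ^ 3 * py ^ 5) = 0 := by
      rw [sub_smul, h, sub_self]
    rw [← map_zsmul (Ideal.Quotient.mk I8)] at hz
    rw [Ideal.Quotient.eq_zero_iff_mem] at hz
    rw [zsmul_eq_mul, ← map_intCast (C : ℤ →+* MvPolynomial (Fin 2) ℤ) (m - m'),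
      Int.cast_id] at hz
    have := main (m - m') hz
    linarith [this]
end

section
/- Let c = (1−x²)²(1−y²)⁴(1−(x−y)²) in the polynomial ring ℤ[x,y], where x and y are given degree 1, and let c₆ denote the homogeneous component of c of degree 6. Then c₆ − (−10y⁶ + 12xy⁵ − 26x²y⁴ + 16x³y³) lies in the ideal of ℤ[x,y] generated by x⁴ and y⁸(x−y)². -/
open MvPolynomial

/-- The total Chern class `c = (1−x²)²(1−y²)⁴(1−(x−y)²)` of `M(P¹², λ₂^{⟨12⟩})`. -/
noncomputable def c12 : MvPolynomial (Fin 2) ℤ :=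
  (1 - px ^ 2) ^ 2 * (1 - py ^ 2) ^ 4 * (1 - (px - py) ^ 2)

noncomputable def T (a : ℤ) (i j : ℕ) : MvPolynomial (Fin 2) ℤ := C a * px ^ i * py ^ j

lemma T_hom (a : ℤ) (i j n : ℕ) (h : i + j = n) : (T a i j).IsHomogeneous n := by
  subst h
  simpa [T, px, py, mul_assoc] using
    (((isHomogeneous_X_pow (R := ℤ) (0 : Fin 2) i).mul
      (isHomogeneous_X_pow (R := ℤ) (1 : Fin 2) j)).C_mul a)

lemma T_eq (a : ℤ) (i j : ℕ) : T a i j = (a : MvPolynomial (Fin 2) ℤ) * px ^ i * py ^ j := by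
  rw [T, ← eq_intCast (C : ℤ →+* MvPolynomial (Fin 2) ℤ)]

noncomputable def P0 : MvPolynomial (Fin 2) ℤ := T (1) 0 0
noncomputable def P2 : MvPolynomial (Fin 2) ℤ := T (-5) 0 2 + T (2) 1 1 + T (-3) 2 0
noncomputable def P4 : MvPolynomial (Fin 2) ℤ := T (10) 0 4 + T (-8) 1 3 + T (14) 2 2 + T (-4) 3 1 + T (3) 4 0
noncomputable def P6 : MvPolynomial (Fin 2) ℤ := T (-10) 0 6 + T (12) 1 5 + T (-26) 2 4 + T (16) 3 3 + T (-13) 4 2 + T (2) 5 1 + T (-1) 6 0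
noncomputable def P8 : MvPolynomial (Fin 2) ℤ := T (5) 0 8 + T (-8) 1 7 + T (24) 2 6 + T (-24) 3 5 + T (22) 4 4 + T (-8) 5 3 + T (4) 6 2
noncomputable def P10 : MvPolynomial (Fin 2) ℤ := T (-1) 0 10 + T (2) 1 9 + T (-11) 2 8 + T (16) 3 7 + T (-18) 4 6 + T (12) 5 5 + T (-6) 6 4
noncomputable def P12 : MvPolynomial (Fin 2) ℤ := T (2) 2 10 + T (-4) 3 9 + T (7) 4 8 + T (-8) 5 7 + T (4) 6 6
noncomputable def P14 : MvPolynomial (Fin 2) ℤ := T (-1) 4 10 + T (2) 5 9 + T (-1) 6 8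

lemma hP0 : P0.IsHomogeneous 0 := T_hom _ _ _ _ rfl
lemma hP2 : P2.IsHomogeneous 2 := by
  unfold P2
  repeat' refine IsHomogeneous.add ?_ (T_hom _ _ _ _ rfl)
  exact T_hom _ _ _ _ rfl
lemma hP4 : P4.IsHomogeneous 4 := by
  unfold P4
  repeat' refine IsHomogeneous.add ?_ (T_hom _ _ _ _ rfl)
  exact T_hom _ _ _ _ rfl
lemma hP6 : P6.IsHomogeneous 6 := by
  unfold P6
  repeat' refine IsHomogeneous.add ?_ (T_hom _ _ _ _ rfl)
  exact T_hom _ _ _ _ rfl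
lemma hP8 : P8.IsHomogeneous 8 := by
  unfold P8
  repeat' refine IsHomogeneous.add ?_ (T_hom _ _ _ _ rfl)
  exact T_hom _ _ _ _ rfl
lemma hP10 : P10.IsHomogeneous 10 := by
  unfold P10
  repeat' refine IsHomogeneous.add ?_ (T_hom _ _ _ _ rfl)
  exact T_hom _ _ _ _ rfl
lemma hP12 : P12.IsHomogeneous 12 := by
  unfold P12
  repeat' refine IsHomogeneous.add ?_ (T_hom _ _ _ _ rfl)
  exact T_hom _ _ _ _ rfl
lemma hP14 : P14.IsHomogeneous 14 := by
  unfold P14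
  repeat' refine IsHomogeneous.add ?_ (T_hom _ _ _ _ rfl)
  exact T_hom _ _ _ _ rfl

lemma c12_eq : c12 = P0 + P2 + P4 + P6 + P8 + P10 + P12 + P14 := by
  simp only [c12, P0, P2, P4, P6, P8, P10, P12, P14, T_eq, px, py]
  push_cast
  ring

lemma key : homogeneousComponent 6 c12 = P6 := by
  rw [c12_eq]
  simp only [map_add,
    homogeneousComponent_of_mem ((mem_homogeneousSubmodule _ _).2 hP0),
    homogeneousComponent_of_mem ((mem_homogeneousSubmodule _ _).2 hP2),
    homogeneousComponent_of_mem ((mem_homogeneousSubmodule _ _).2 hP4),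
    homogeneousComponent_of_mem ((mem_homogeneousSubmodule _ _).2 hP6),
    homogeneousComponent_of_mem ((mem_homogeneousSubmodule _ _).2 hP8),
    homogeneousComponent_of_mem ((mem_homogeneousSubmodule _ _).2 hP10),
    homogeneousComponent_of_mem ((mem_homogeneousSubmodule _ _).2 hP12),
    homogeneousComponent_of_mem ((mem_homogeneousSubmodule _ _).2 hP14)]
  norm_num

/-- The homogeneous component `c₆` of `c` (with `x`, `y` of degree 1) satisfies
`c₆ ≡ −10y⁶ + 12xy⁵ − 26x²y⁴ + 16x³y³` modulo the ideal `⟨x⁴, y⁸(x−y)²⟩` of `ℤ[x,y]`. -/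
theorem stmt4 :
    homogeneousComponent 6 c12 -
        (-10 * py ^ 6 + 12 * px * py ^ 5 - 26 * px ^ 2 * py ^ 4 + 16 * px ^ 3 * py ^ 3) ∈
      Ideal.span ({px ^ 4, py ^ 8 * (px - py) ^ 2} : Set (MvPolynomial (Fin 2) ℤ)) := by
  rw [key]
  rw [Ideal.mem_span_pair]
  refine ⟨-(px ^ 2) + 2 * px * py - 13 * py ^ 2, 0, ?_⟩
  simp only [P6, T_eq]
  push_cast
  ring
end

section
/- Let c = (1−x²)²(1−y²)⁴(1−(x−y)²) in the polynomial ring ℤ[x,y], where x and y are given degree 1, and let c₆ denote the homogeneous component of c of degree 6. Then c₆² − 64·x³y⁹ lies in the ideal of ℤ[x,y] generated by x⁴ and y⁸(x−y)²; equivalently, c₆² is congruent to 64·x³y⁹ modulo that ideal. -/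
open MvPolynomial

lemma hmono (a : ℤ) (i j n : ℕ) (h : i + j = n) :
    ((C a : MvPolynomial (Fin 2) ℤ) * px ^ i * py ^ j).IsHomogeneous n := by
  subst h
  simpa [px, py] using
    (((isHomogeneous_C (Fin 2) a).mul ((isHomogeneous_X ℤ (0 : Fin 2)).pow i)).mul
      ((isHomogeneous_X ℤ (1 : Fin 2)).pow j))

noncomputable def h0 : MvPolynomial (Fin 2) ℤ := C (1) * px ^ 0 * py ^ 0

lemma H0 : (h0).IsHomogeneous 0 := by
  unfold h0
  exact hmono (1) 0 0 0 (by norm_num)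

noncomputable def h2 : MvPolynomial (Fin 2) ℤ := C (-5) * px ^ 0 * py ^ 2 + C (2) * px ^ 1 * py ^ 1 + C (-3) * px ^ 2 * py ^ 0

lemma H2 : (h2).IsHomogeneous 2 := by
  unfold h2
  exact ((hmono (-5) 0 2 2 (by norm_num)).add (hmono (2) 1 1 2 (by norm_num))).add (hmono (-3) 2 0 2 (by norm_num))

noncomputable def h4 : MvPolynomial (Fin 2) ℤ := C (10) * px ^ 0 * py ^ 4 + C (-8) * px ^ 1 * py ^ 3 + C (14) * px ^ 2 * py ^ 2 + C (-4) * px ^ 3 * py ^ 1 + C (3) * px ^ 4 * py ^ 0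

lemma H4 : (h4).IsHomogeneous 4 := by
  unfold h4
  exact ((((hmono (10) 0 4 4 (by norm_num)).add (hmono (-8) 1 3 4 (by norm_num))).add (hmono (14) 2 2 4 (by norm_num))).add (hmono (-4) 3 1 4 (by norm_num))).add (hmono (3) 4 0 4 (by norm_num))

noncomputable def h6 : MvPolynomial (Fin 2) ℤ := C (-10) * px ^ 0 * py ^ 6 + C (12) * px ^ 1 * py ^ 5 + C (-26) * px ^ 2 * py ^ 4 + C (16) * px ^ 3 * py ^ 3 + C (-13) * px ^ 4 * py ^ 2 + C (2) * px ^ 5 * py ^ 1 + C (-1) * px ^ 6 * py ^ 0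

lemma H6 : (h6).IsHomogeneous 6 := by
  unfold h6
  exact ((((((hmono (-10) 0 6 6 (by norm_num)).add (hmono (12) 1 5 6 (by norm_num))).add (hmono (-26) 2 4 6 (by norm_num))).add (hmono (16) 3 3 6 (by norm_num))).add (hmono (-13) 4 2 6 (by norm_num))).add (hmono (2) 5 1 6 (by norm_num))).add (hmono (-1) 6 0 6 (by norm_num))

noncomputable def h8 : MvPolynomial (Fin 2) ℤ := C (5) * px ^ 0 * py ^ 8 + C (-8) * px ^ 1 * py ^ 7 + C (24) * px ^ 2 * py ^ 6 + C (-24) * px ^ 3 * py ^ 5 + C (22) * px ^ 4 * py ^ 4 + C (-8) * px ^ 5 * py ^ 3 + C (4) * px ^ 6 * py ^ 2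

lemma H8 : (h8).IsHomogeneous 8 := by
  unfold h8
  exact ((((((hmono (5) 0 8 8 (by norm_num)).add (hmono (-8) 1 7 8 (by norm_num))).add (hmono (24) 2 6 8 (by norm_num))).add (hmono (-24) 3 5 8 (by norm_num))).add (hmono (22) 4 4 8 (by norm_num))).add (hmono (-8) 5 3 8 (by norm_num))).add (hmono (4) 6 2 8 (by norm_num))

noncomputable def h10 : MvPolynomial (Fin 2) ℤ := C (-1) * px ^ 0 * py ^ 10 + C (2) * px ^ 1 * py ^ 9 + C (-11) * px ^ 2 * py ^ 8 + C (16) * px ^ 3 * py ^ 7 + C (-18) * px ^ 4 * py ^ 6 + C (12) * px ^ 5 * py ^ 5 + C (-6) * px ^ 6 * py ^ 4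

lemma H10 : (h10).IsHomogeneous 10 := by
  unfold h10
  exact ((((((hmono (-1) 0 10 10 (by norm_num)).add (hmono (2) 1 9 10 (by norm_num))).add (hmono (-11) 2 8 10 (by norm_num))).add (hmono (16) 3 7 10 (by norm_num))).add (hmono (-18) 4 6 10 (by norm_num))).add (hmono (12) 5 5 10 (by norm_num))).add (hmono (-6) 6 4 10 (by norm_num))

noncomputable def h12 : MvPolynomial (Fin 2) ℤ := C (2) * px ^ 2 * py ^ 10 + C (-4) * px ^ 3 * py ^ 9 + C (7) * px ^ 4 * py ^ 8 + C (-8) * px ^ 5 * py ^ 7 + C (4) * px ^ 6 * py ^ 6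

lemma H12 : (h12).IsHomogeneous 12 := by
  unfold h12
  exact ((((hmono (2) 2 10 12 (by norm_num)).add (hmono (-4) 3 9 12 (by norm_num))).add (hmono (7) 4 8 12 (by norm_num))).add (hmono (-8) 5 7 12 (by norm_num))).add (hmono (4) 6 6 12 (by norm_num))

noncomputable def h14 : MvPolynomial (Fin 2) ℤ := C (-1) * px ^ 4 * py ^ 10 + C (2) * px ^ 5 * py ^ 9 + C (-1) * px ^ 6 * py ^ 8

lemma H14 : (h14).IsHomogeneous 14 := by
  unfold h14
  exact ((hmono (-1) 4 10 14 (by norm_num)).add (hmono (2) 5 9 14 (by norm_num))).add (hmono (-1) 6 8 14 (by norm_num))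

lemma hdec : c12 = h0 + h2 + h4 + h6 + h8 + h10 + h12 + h14 := by
  unfold c12 h0 h2 h4 h6 h8 h10 h12 h14
  simp only [map_neg, map_ofNat, map_one]
  ring

lemma hc6 : homogeneousComponent 6 c12 = h6 := by
  rw [hdec]
  simp only [map_add]
  rw [homogeneousComponent_of_mem ((mem_homogeneousSubmodule _ _).2 H0)]
  rw [homogeneousComponent_of_mem ((mem_homogeneousSubmodule _ _).2 H2)]
  rw [homogeneousComponent_of_mem ((mem_homogeneousSubmodule _ _).2 H4)]
  rw [homogeneousComponent_of_mem ((mem_homogeneousSubmodule _ _).2 H6)]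
  rw [homogeneousComponent_of_mem ((mem_homogeneousSubmodule _ _).2 H8)]
  rw [homogeneousComponent_of_mem ((mem_homogeneousSubmodule _ _).2 H10)]
  rw [homogeneousComponent_of_mem ((mem_homogeneousSubmodule _ _).2 H12)]
  rw [homogeneousComponent_of_mem ((mem_homogeneousSubmodule _ _).2 H14)]
  norm_num

/-- The homogeneous component `c₆` of `c` (with `x`, `y` of degree 1) satisfies
`c₆² ≡ 64·x³y⁹` modulo the ideal `⟨x⁴, y⁸(x−y)²⟩` of `ℤ[x,y]`. -/
theorem stmt5 :
    homogeneousComponent 6 c12 ^ 2 - 64 * px ^ 3 * py ^ 9 ∈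
      Ideal.span ({px ^ 4, py ^ 8 * (px - py) ^ 2} : Set (MvPolynomial (Fin 2) ℤ)) := by
  rw [hc6]
  rw [Ideal.mem_span_pair]
  refine ⟨C 836 * py ^ 8 + C (-1184) * px * py ^ 7 + C 1000 * px ^ 2 * py ^ 6
      + C (-544) * px ^ 3 * py ^ 5 + C 285 * px ^ 4 * py ^ 4 + C (-84) * px ^ 5 * py ^ 3
      + C 30 * px ^ 6 * py ^ 2 + C (-4) * px ^ 7 * py + C 1 * px ^ 8,
    C 100 * py ^ 2 + C (-40) * px * py + C 484 * px ^ 2, ?_⟩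
  unfold h6
  simp only [map_neg, map_ofNat, map_one]
  ring
end

section
/- For every integer m, if m·x³y⁹ lies in the ideal of ℤ[x,y] generated by x⁴ and y⁸(x−y)², then m = 0. In particular x³y⁹ is not in that ideal, so its image in ℤ[x,y]/⟨x⁴, y⁸(x−y)²⟩ generates an infinite cyclic subgroup. -/
open MvPolynomial

/-- The ideal `⟨x⁴, y⁸(x−y)²⟩` of `ℤ[x,y]`. -/
noncomputable def I12 : Ideal (MvPolynomial (Fin 2) ℤ) :=
  Ideal.span ({px ^ 4, py ^ 8 * (px - py) ^ 2} : Set (MvPolynomial (Fin 2) ℤ))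

/-- The residue functional on `ℤ[y][x]`: `L(f) = 4·f₀,₁₂ + 3·f₁,₁₁ + 2·f₂,₁₀ + f₃,₉`. -/
noncomputable def L12 (f : Polynomial (Polynomial ℤ)) : ℤ :=
  4 * (f.coeff 0).coeff 12 + 3 * (f.coeff 1).coeff 11 +
    2 * (f.coeff 2).coeff 10 + (f.coeff 3).coeff 9

lemma L12_add (f g : Polynomial (Polynomial ℤ)) : L12 (f + g) = L12 f + L12 g := by
  simp [L12]; ring

lemma L12_sub (f g : Polynomial (Polynomial ℤ)) : L12 (f - g) = L12 f - L12 g := by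
  simp [L12]; ring

lemma coeff_mul_CXpow (q : Polynomial (Polynomial ℤ)) (k n : ℕ) :
    (q * (Polynomial.C Polynomial.X) ^ k).coeff n = q.coeff n * Polynomial.X ^ k := by
  rw [← map_pow, Polynomial.coeff_mul_C]

lemma L12_x4 (p : Polynomial (Polynomial ℤ)) : L12 (p * Polynomial.X ^ 4) = 0 := by
  simp [L12, Polynomial.coeff_mul_X_pow']

lemma L12_g (q : Polynomial (Polynomial ℤ)) :
    L12 (q * ((Polynomial.C Polynomial.X) ^ 8 *
      (Polynomial.X - Polynomial.C Polynomial.X) ^ 2)) = 0 := by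
  have h : q * ((Polynomial.C Polynomial.X) ^ 8 *
      (Polynomial.X - Polynomial.C Polynomial.X) ^ 2) =
      (q * (Polynomial.C Polynomial.X) ^ 10 +
        q * (Polynomial.C Polynomial.X) ^ 8 * Polynomial.X ^ 2) -
      (q * (Polynomial.C Polynomial.X) ^ 9 * Polynomial.X ^ 1 +
        q * (Polynomial.C Polynomial.X) ^ 9 * Polynomial.X ^ 1) := by
    ring
  rw [h, L12_sub, L12_add, L12_add]
  simp only [L12, Polynomial.coeff_mul_X_pow', coeff_mul_CXpow]
  norm_num [Polynomial.coeff_mul_X_pow']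
  ring

/-- The substitution `x ↦ X`, `y ↦ C X` into `ℤ[y][x]`. -/
noncomputable def phi12 : MvPolynomial (Fin 2) ℤ →ₐ[ℤ] Polynomial (Polynomial ℤ) :=
  aeval ![Polynomial.X, Polynomial.C Polynomial.X]

lemma phi12_px : phi12 px = Polynomial.X := by simp [phi12, px]
lemma phi12_py : phi12 py = Polynomial.C Polynomial.X := by simp [phi12, py]

lemma key_s6 (m : ℤ) (h : C m * (px ^ 3 * py ^ 9) ∈ I12) : m = 0 := by
  rw [I12, Ideal.mem_span_pair] at h
  obtain ⟨p, q, hpq⟩ := h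
  have := congrArg (fun f => L12 (phi12 f)) hpq
  simp only [map_add, map_mul, map_pow, map_sub, phi12_px, phi12_py] at this
  rw [L12_add, L12_x4, L12_g] at this
  have hC : phi12 (C m) = Polynomial.C (Polynomial.C m) := by
    simp [phi12]
  rw [hC] at this
  have : L12 (Polynomial.C (Polynomial.C m) *
      (Polynomial.X ^ 3 * (Polynomial.C Polynomial.X) ^ 9)) = m := by
    have h2 : Polynomial.C (Polynomial.C m) *
        (Polynomial.X ^ 3 * (Polynomial.C Polynomial.X) ^ 9) =
        Polynomial.C (Polynomial.C m * Polynomial.X ^ 9) * Polynomial.X ^ 3 := by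
      simp only [map_mul, map_pow]; ring
    rw [h2]
    simp [L12, Polynomial.coeff_C_mul, Polynomial.coeff_X_pow,
      Polynomial.coeff_mul_X_pow', Polynomial.coeff_C, ← map_pow]
  omega

/-- For every integer `m`, if `m·x³y⁹ ∈ ⟨x⁴, y⁸(x−y)²⟩` then `m = 0`; in particular `x³y⁹`
is not in that ideal and its image in the quotient `ℤ[x,y]/⟨x⁴, y⁸(x−y)²⟩` generates an
infinite cyclic subgroup (i.e. `m ↦ m • [x³y⁹]` is injective). -/
theorem stmt6 :
    (∀ m : ℤ, C m * (px ^ 3 * py ^ 9) ∈ I12 → m = 0) ∧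
    px ^ 3 * py ^ 9 ∉ I12 ∧
    Function.Injective (fun m : ℤ => m • Ideal.Quotient.mk I12 (px ^ 3 * py ^ 9)) := by
  refine ⟨key_s6, ?_, ?_⟩
  · intro h
    have := key_s6 1 (by simpa using h)
    exact one_ne_zero this
  · intro a b hab
    simp only at hab
    have h : ((a - b) • Ideal.Quotient.mk I12 (px ^ 3 * py ^ 9)) = 0 := by
      rw [sub_smul, hab, sub_self]
    rw [← map_zsmul] at h
    rw [Ideal.Quotient.eq_zero_iff_mem] at h
    rw [zsmul_eq_mul] at h
    have h2 : ((a - b : ℤ) : MvPolynomial (Fin 2) ℤ) = C (a - b) := by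
      simp
    rw [h2] at h
    have := key_s6 (a - b) h
    omega
end

section
/- The additive submonoid of ℕ generated by the set {4a+5 : a ∈ ℕ} ∪ {8b+11 : b ∈ ℕ} consists exactly of those natural numbers n with n ∉ {1, 2, 3, 4, 6, 7, 8, 12}. That is: every natural number other than 1, 2, 3, 4, 6, 7, 8, 12 can be written as a finite sum of numbers each of the form 4a+5 or 8b+11 (the empty sum giving 0), and none of 1, 2, 3, 4, 6, 7, 8, 12 can be so written. -/
private def S : Set ℕ := {m : ℕ | ∃ a : ℕ, m = 4 * a + 5} ∪ {m : ℕ | ∃ b : ℕ, m = 8 * b + 11}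

private lemma gen1 (a : ℕ) : (4 * a + 5) ∈ AddSubmonoid.closure S :=
  AddSubmonoid.subset_closure (Or.inl ⟨a, rfl⟩)

private lemma gen2 (b : ℕ) : (8 * b + 11) ∈ AddSubmonoid.closure S :=
  AddSubmonoid.subset_closure (Or.inr ⟨b, rfl⟩)

private lemma back : ∀ n : ℕ, n ∉ ({1, 2, 3, 4, 6, 7, 8, 12} : Set ℕ) →
    n ∈ AddSubmonoid.closure S := by
  intro n
  induction n using Nat.strong_induction_on with
  | _ n ih =>
    intro hn
    simp only [Set.mem_insert_iff, Set.mem_singleton_iff, not_or] at hn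
    obtain ⟨h1, h2, h3, h4, h6, h7, h8, h12⟩ := hn
    by_cases hle : n ≤ 17
    · interval_cases n <;> first
      | omega
      | exact zero_mem _
      | exact gen1 0
      | exact gen1 1
      | exact gen2 0
      | exact gen1 2
      | exact gen1 3
      | exact add_mem (gen1 0) (gen1 0)
      | exact add_mem (gen1 0) (gen1 1)
      | exact add_mem (gen1 0) (add_mem (gen1 0) (gen1 0))
      | exact add_mem (gen1 0) (gen2 0)
    · push_neg at hle
      have h5 : n - 5 ∈ AddSubmonoid.closure S := by
        apply ih (n - 5) (by omega)
        simp only [Set.mem_insert_iff, Set.mem_singleton_iff, not_or]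
        omega
      have : n = 5 + (n - 5) := by omega
      rw [this]
      exact add_mem (gen1 0) h5

private lemma fwd : ∀ n : ℕ, n ∈ AddSubmonoid.closure S →
    n = 0 ∨ (5 ≤ n ∧ n ≠ 6 ∧ n ≠ 7 ∧ n ≠ 8 ∧ n ≠ 12) := by
  intro n hn
  induction hn using AddSubmonoid.closure_induction with
  | mem x hx =>
    rcases hx with ⟨a, rfl⟩ | ⟨b, rfl⟩ <;> right <;> omega
  | zero => exact Or.inl rfl
  | add x y _ _ hx hy =>
    rcases hx with rfl | hx
    · simpa using hy
    · rcases hy with rfl | hy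
      · simpa using Or.inr hx
      · right; omega

/-- The additive submonoid of `ℕ` generated by the numbers `4a+5` and `8b+11` (for
`a, b ∈ ℕ`) consists exactly of the natural numbers not among `1, 2, 3, 4, 6, 7, 8, 12`. -/
theorem stmt7 :
    ∀ n : ℕ,
      n ∈ AddSubmonoid.closure
          ({m : ℕ | ∃ a : ℕ, m = 4 * a + 5} ∪ {m : ℕ | ∃ b : ℕ, m = 8 * b + 11}) ↔
        n ∉ ({1, 2, 3, 4, 6, 7, 8, 12} : Set ℕ) := by
  intro n
  constructor
  · intro h
    have := fwd n h
    simp only [Set.mem_insert_iff, Set.mem_singleton_iff, not_or]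
    omega
  · exact back n
end

section
/- Let k ≥ 2 and let n₁,…,n_k be natural numbers. In the polynomial ring (ℤ/2ℤ)[a₁,…,a_k, e], let I be the ideal generated by a₁^{n₁+1},…,a_k^{n_k+1} and the product ∏_{i=1}^{k}(a_i + e). Then the degree-1 polynomial n₁·a₁ + ⋯ + n_k·a_k + k·e (coefficients reduced mod 2) belongs to I if and only if k is even and every n_i is even. -/
open MvPolynomial DualNumber

lemma eps_pow_zero {m : ℕ} (hm : 2 ≤ m) : (ε : DualNumber (ZMod 2)) ^ m = 0 := by
  obtain ⟨j, rfl⟩ := Nat.exists_eq_add_of_le hm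
  rw [pow_add, pow_two, eps_mul_eps, zero_mul]

lemma eps_ne_zero' : (ε : DualNumber (ZMod 2)) ≠ 0 := by
  intro h
  have := congrArg TrivSqZeroExt.snd h
  simp at this

lemma even_cast_zmod2 {m : ℕ} : (m : ZMod 2) = 0 ↔ Even m := by
  rw [ZMod.natCast_eq_zero_iff]
  exact ⟨fun h => even_iff_two_dvd.mpr h, fun h => even_iff_two_dvd.mp h⟩

lemma odd_cast_zmod2 {m : ℕ} (h : ¬ Even m) : (m : ZMod 2) = 1 := by
  rw [← ZMod.natCast_mod, Nat.odd_iff.mp (Nat.not_even_iff_odd.mp h)]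
  norm_num

/-- Let `k ≥ 2` and `n₁,…,n_k ∈ ℕ`. In `(ℤ/2ℤ)[a₁,…,a_k,e]` (realized as
`MvPolynomial (Fin (k+1)) (ZMod 2)` with `aᵢ = X i` for `i < k` and `e = X (Fin.last k)`),
let `I` be the ideal generated by `a₁^{n₁+1},…,a_k^{n_k+1}` and `∏ᵢ (aᵢ + e)`. Then the
degree-one polynomial `n₁·a₁ + ⋯ + n_k·a_k + k·e` (coefficients reduced mod 2) belongs to
`I` if and only if `k` is even and every `nᵢ` is even. -/
theorem stmt10 (k : ℕ) (hk : 2 ≤ k) (n : Fin k → ℕ) :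
    (∑ i : Fin k, ((n i : ZMod 2) •
          (X i.castSucc : MvPolynomial (Fin (k + 1)) (ZMod 2))) +
        (k : ZMod 2) • (X (Fin.last k) : MvPolynomial (Fin (k + 1)) (ZMod 2)) ∈
      Ideal.span
        ((Set.range fun i : Fin k =>
            (X i.castSucc : MvPolynomial (Fin (k + 1)) (ZMod 2)) ^ (n i + 1)) ∪
          {∏ i : Fin k,
            ((X i.castSucc : MvPolynomial (Fin (k + 1)) (ZMod 2)) + X (Fin.last k))})) ↔
      (Even k ∧ ∀ i : Fin k, Even (n i)) := by
  constructor
  · intro hp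
    by_contra hcon
    rw [not_and_or] at hcon
    -- choose the distinguished variable v
    have hv : ∃ v : Fin (k+1),
        (∀ i : Fin k, (if (i.castSucc : Fin (k+1)) = v then (ε : DualNumber (ZMod 2)) else 0) ^ (n i + 1) = 0)
        ∧ (∏ i : Fin k, ((if (i.castSucc : Fin (k+1)) = v then (ε : DualNumber (ZMod 2)) else 0)
              + (if (Fin.last k : Fin (k+1)) = v then ε else 0)) = 0)
        ∧ (∑ i : Fin k, (n i : ZMod 2) •
              (if (i.castSucc : Fin (k+1)) = v then (ε : DualNumber (ZMod 2)) else 0)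
            + (k : ZMod 2) • (if (Fin.last k : Fin (k+1)) = v then (ε : DualNumber (ZMod 2)) else 0)) = ε := by
      have hlast : ∀ i : Fin k, (Fin.last k : Fin (k+1)) ≠ i.castSucc :=
        fun i => (ne_of_lt i.castSucc_lt_last).symm
      by_cases hj : ∃ j : Fin k, ¬ Even (n j)
      · obtain ⟨j, hjodd⟩ := hj
        refine ⟨j.castSucc, ?_, ?_, ?_⟩
        · intro i
          by_cases hij : i = j
          · subst hij
            rw [if_pos rfl]
            obtain ⟨m, hm⟩ := Nat.not_even_iff_odd.mp hjodd
            exact eps_pow_zero (by omega)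
          · rw [if_neg (by simpa [Fin.castSucc_inj] using hij), zero_pow (Nat.succ_ne_zero _)]
        · have : Nontrivial (Fin k) := Fin.nontrivial_iff_two_le.mpr hk
          obtain ⟨i, hij⟩ := exists_ne j
          refine Finset.prod_eq_zero (Finset.mem_univ i) ?_
          rw [if_neg (by simpa [Fin.castSucc_inj] using hij), if_neg (hlast j), add_zero]
        · rw [if_neg (hlast j), smul_zero, add_zero]
          rw [Finset.sum_eq_single j]
          · rw [if_pos rfl, odd_cast_zmod2 hjodd, one_smul]
          · intro i _ hij
            rw [if_neg (by simpa [Fin.castSucc_inj] using hij), smul_zero]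
          · intro h; exact absurd (Finset.mem_univ j) h
      · push_neg at hj
        have hkodd : ¬ Even k := by
          rcases hcon with h | h
          · exact h
          · exact absurd hj h
        refine ⟨Fin.last k, ?_, ?_, ?_⟩
        · intro i
          rw [if_neg (fun h => hlast i h.symm), zero_pow (Nat.succ_ne_zero _)]
        · have : ∀ i : Fin k, ((if (i.castSucc : Fin (k+1)) = Fin.last k then (ε : DualNumber (ZMod 2)) else 0)
              + (if (Fin.last k : Fin (k+1)) = Fin.last k then (ε : DualNumber (ZMod 2)) else 0)) = ε := by
            intro i
            rw [if_neg (fun h => hlast i h.symm), if_pos rfl, zero_add]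
          rw [Finset.prod_congr rfl (fun i _ => this i), Finset.prod_const,
            Finset.card_univ, Fintype.card_fin]
          exact eps_pow_zero hk
        · rw [if_pos rfl, odd_cast_zmod2 hkodd, one_smul]
          rw [Finset.sum_eq_zero, zero_add]
          intro i _
          rw [even_cast_zmod2.mpr (hj i), zero_smul]
    obtain ⟨v, hgen, hprod, hsum⟩ := hv
    set f : Fin (k+1) → DualNumber (ZMod 2) := fun w => if w = v then ε else 0 with hf
    have hker : Ideal.span
        ((Set.range fun i : Fin k =>
            (X i.castSucc : MvPolynomial (Fin (k + 1)) (ZMod 2)) ^ (n i + 1)) ∪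
          {∏ i : Fin k,
            ((X i.castSucc : MvPolynomial (Fin (k + 1)) (ZMod 2)) + X (Fin.last k))})
        ≤ RingHom.ker (aeval f : MvPolynomial (Fin (k+1)) (ZMod 2) →ₐ[ZMod 2] DualNumber (ZMod 2)).toRingHom := by
      rw [Ideal.span_le]
      rintro s (⟨i, rfl⟩ | hs)
      · simp only [SetLike.mem_coe, RingHom.mem_ker, AlgHom.toRingHom_eq_coe,
          RingHom.coe_coe, map_pow, aeval_X, hf]
        exact hgen i
      · simp only [Set.mem_singleton_iff] at hs
        subst hs
        simp only [SetLike.mem_coe, RingHom.mem_ker, AlgHom.toRingHom_eq_coe,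
          RingHom.coe_coe, map_prod, map_add, aeval_X, hf]
        exact hprod
    have h0 := hker hp
    rw [RingHom.mem_ker] at h0
    simp only [AlgHom.toRingHom_eq_coe, RingHom.coe_coe, map_add, map_sum,
      map_smul, aeval_X, hf] at h0
    rw [hsum] at h0
    exact eps_ne_zero' h0
  · rintro ⟨hke, hne⟩
    have h1 : ∀ i : Fin k, (n i : ZMod 2) = 0 := fun i => even_cast_zmod2.mpr (hne i)
    have h2 : (k : ZMod 2) = 0 := even_cast_zmod2.mpr hke
    have : (∑ i : Fin k, ((n i : ZMod 2) •
          (X i.castSucc : MvPolynomial (Fin (k + 1)) (ZMod 2))) +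
        (k : ZMod 2) • (X (Fin.last k) : MvPolynomial (Fin (k + 1)) (ZMod 2))) = 0 := by
      rw [h2, zero_smul, add_zero, Finset.sum_eq_zero]
      intro i _
      rw [h1 i, zero_smul]
    rw [this]
    exact Ideal.zero_mem _
end
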